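/- Parallel teleportation of k qubits: let α be a finite type, k ∈ ℕ, and Ψ : α × (Fin k → Fin 2) → ℂ a joint state of an ancilla register A and qubits q₁,…,q_k. Attach k fresh EPR pairs (r₁ᵢ, r₂ᵢ) for i = 1,…,k and apply B† to each pair (qᵢ, r₁ᵢ) (identity elsewhere); call the result Φ. Then the component of Φ in which every pair (qᵢ, r₁ᵢ) is in state (0,0), regarded as a vector on α × (Fin k → Fin 2) via the qubits r₂ᵢ, equals 2^{−k}·Ψ. -/
import Mathlib


open Matrix Kronecker

noncomputable def Hgate : Matrix (Fin 2) (Fin 2) ℂ :=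
  ((1 / Real.sqrt 2 : ℝ) : ℂ) • !![1, 1; 1, -1]

/-- The CNOT gate: `CNOT(|a⟩⊗|b⟩) = |a⟩⊗|a⊕b⟩`. -/
def CNOT : Matrix (Fin 2 × Fin 2) (Fin 2 × Fin 2) ℂ :=
  fun p q => if p = (q.1, q.1 + q.2) then 1 else 0

/-- The Bell gate `B = CNOT * (H ⊗ I₂)`. -/
noncomputable def Bgate : Matrix (Fin 2 × Fin 2) (Fin 2 × Fin 2) ℂ :=
  CNOT * (Hgate ⊗ₖ (1 : Matrix (Fin 2) (Fin 2) ℂ))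

/-- `B†`, the conjugate transpose of the Bell gate. -/
noncomputable def Bdag : Matrix (Fin 2 × Fin 2) (Fin 2 × Fin 2) ℂ := Bgateᴴ

/-- The computational basis state `|a⟩` of one qubit. -/
def ket (a : Fin 2) : Fin 2 → ℂ := fun i => if i = a then 1 else 0

/-- The EPR state `B(|0⟩⊗|0⟩) = (|00⟩+|11⟩)/√2`. -/
noncomputable def EPR : Fin 2 × Fin 2 → ℂ :=
  Bgate.mulVec fun p => ket 0 p.1 * ket 0 p.2

/-- The state obtained from `Ψ ⊗ EPR^{⊗k}` (the `i`-th EPR pair occupying fresh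
qubits `r₁ᵢ, r₂ᵢ`) by applying `B†` to each pair `(qᵢ, r₁ᵢ)` and the identity
elsewhere.  Coordinates are `(a, q, r₁, r₂)`. -/
noncomputable def parallelTeleported {α : Type*} [Fintype α] (k : ℕ)
    (Ψ : α × (Fin k → Fin 2) → ℂ) :
    α × (Fin k → Fin 2) × (Fin k → Fin 2) × (Fin k → Fin 2) → ℂ :=
  fun x => ∑ q' : Fin k → Fin 2, ∑ r' : Fin k → Fin 2,
    (∏ i, Bdag (x.2.1 i, x.2.2.1 i) (q' i, r' i)) *
      (Ψ (x.1, q') * ∏ i, EPR (r' i, x.2.2.2 i))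

/-- Parallel teleportation of `k` qubits: the component of the teleported state in
which every pair `(qᵢ, r₁ᵢ)` is in state `(0,0)`, regarded as a joint state of the
ancilla register and the qubits `r₂ᵢ`, equals `2^{−k}·Ψ`. -/
theorem parallel_postselected_teleportation {α : Type*} [Fintype α] (k : ℕ)
    (Ψ : α × (Fin k → Fin 2) → ℂ) :
    (fun p : α × (Fin k → Fin 2) =>
        parallelTeleported k Ψ (p.1, fun _ => 0, fun _ => 0, p.2))
      = ((2 : ℂ) ^ k)⁻¹ • Ψ := by
  have hEPR : ∀ q r : Fin 2, EPR (q, r)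
      = if q = r then (((Real.sqrt 2 : ℝ) : ℂ))⁻¹ else 0 := by
    intro q r
    fin_cases q <;> fin_cases r <;>
      simp [EPR, Bgate, CNOT, Hgate, Matrix.mulVec, Matrix.mul_apply, dotProduct,
        Fintype.sum_prod_type, Fin.sum_univ_two, ket, Matrix.one_apply] <;>
      norm_num
  have hB : ∀ q r : Fin 2, Bdag (0, 0) (q, r)
      = if q = r then (((Real.sqrt 2 : ℝ) : ℂ))⁻¹ else 0 := by
    intro q r
    have : Bdag (0, 0) (q, r) = (starRingEnd ℂ) (EPR (q, r)) := by
      simp [Bdag, Matrix.conjTranspose_apply, EPR, Matrix.mulVec, dotProduct,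
        Fintype.sum_prod_type, Fin.sum_univ_two, ket]
    rw [this, hEPR]
    split <;> simp
  set c : ℂ := (((Real.sqrt 2 : ℝ) : ℂ))⁻¹ with hc
  have hprod : ∀ f g : Fin k → Fin 2,
      (∏ i, (if f i = g i then c else 0)) = if f = g then c ^ k else 0 := by
    intro f g
    by_cases h : f = g
    · subst h; simp
    · rw [if_neg h]
      obtain ⟨i, hi⟩ := Function.ne_iff.mp h
      exact Finset.prod_eq_zero (Finset.mem_univ i) (if_neg hi)
  have hcc : c * c = 2⁻¹ := by
    rw [hc, ← mul_inv]
    norm_num [← Complex.ofReal_mul, Real.mul_self_sqrt]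
  funext p
  obtain ⟨a, r2⟩ := p
  simp only [parallelTeleported, hB, hEPR, hprod, Pi.smul_apply, smul_eq_mul]
  have h1 : ∀ q' : Fin k → Fin 2,
      (∑ r' : Fin k → Fin 2, (if q' = r' then c ^ k else 0) *
        (Ψ (a, q') * if r' = r2 then c ^ k else 0))
      = c ^ k * (Ψ (a, q') * if q' = r2 then c ^ k else 0) := by
    intro q'
    rw [Finset.sum_eq_single q']
    · simp
    · intro r' _ hr'; rw [if_neg (Ne.symm hr'), zero_mul]
    · simp
  rw [Finset.sum_congr rfl (fun q' _ => h1 q'), Finset.sum_eq_single r2]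
  · rw [if_pos rfl,
      show c ^ k * (Ψ (a, r2) * c ^ k) = c ^ k * c ^ k * Ψ (a, r2) by ring,
      ← mul_pow, hcc, inv_pow]
  · intro q' _ hq'; simp [if_neg hq']
  · simp
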